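/- Let Z be a nonempty finite subset of V, let Z' ⊇ Z be a subset with V∖Z' finite, let a ∈ V, r ≥ 0, and let ρ be a rotor configuration. If ρ ∈ E_{r,Z}(a,Z'), then the final rotor configuration σ(a,Z';ρ) contains an oriented path that starts at a vertex x with d_G(x,Z) ≥ r and ends at a vertex of Z; in particular σ(a,Z';ρ) ∈ D_r. -/

import Mathlib

open Classical

universe u

variable {V : Type u}

/-- A rotor mechanism: for each vertex `x`, `τ x` restricts to a bijection of the
neighbor set of `x` having a single orbit. -/
def IsMechanism (G : SimpleGraph V) (τ : V → V → V) : Prop :=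
  ∀ x : V, Set.BijOn (τ x) (G.neighborSet x) (G.neighborSet x) ∧
    ∀ y ∈ G.neighborSet x, ∀ z ∈ G.neighborSet x, ∃ i : ℕ, (τ x)^[i] y = z

/-- One step of the rotor walk with sink `Z`; the walk freezes once it reaches `Z`. -/
noncomputable def rotorStep [DecidableEq V] (τ : V → V → V) (Z : Set V) :
    V × (V → V) → V × (V → V) := fun p =>
  if p.1 ∈ Z then p
  else (τ p.1 (p.2 p.1), Function.update p.2 p.1 (τ p.1 (p.2 p.1)))

/-- The rotor walk with initial location `a`, sink `Z` and initial rotor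
configuration `ρ`: position (first component) and rotor configuration
(second component) at time `t`. -/
noncomputable def rotorWalk [DecidableEq V] (τ : V → V → V) (Z : Set V)
    (a : V) (ρ : V → V) (t : ℕ) : V × (V → V) :=
  (rotorStep τ Z)^[t] (a, ρ)

/-- `Z`-oriented spanning forests of `G`, viewed as rotor configurations,
normalized to be the identity on `Z` (the values on `Z` are inconsequential). -/
def SFset (G : SimpleGraph V) (Z : Set V) : Set (V → V) :=
  {ρ | (∀ x ∉ Z, G.Adj x (ρ x)) ∧ (∀ x : V, ∃ ℓ : ℕ, ρ^[ℓ] x ∈ Z) ∧ ∀ x ∈ Z, ρ x = x}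

/-- The eventual value of an eventually-constant sequence. -/
noncomputable def eventualVal (f : ℕ → V) : V :=
  if h : ∃ t : ℕ, ∀ s : ℕ, t ≤ s → f s = f t then f h.choose else f 0

/-- The final rotor configuration `σ(a, Z; ρ)` of the rotor walk. -/
noncomputable def finalConfig [DecidableEq V] (τ : V → V → V) (Z : Set V)
    (a : V) (ρ : V → V) : V → V :=
  fun x => eventualVal fun t => (rotorWalk τ Z a ρ t).2 x

/-- `ξ_i(a_0, …, a_{i-1}, Z; ρ)`: the rotor configuration after `i` successive
walkers, started at `a_0, …, a_{i-1}`, have performed rotor walks with sink `Z`. -/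
noncomputable def xiConfig [DecidableEq V] (τ : V → V → V) (Z : Set V) (av : ℕ → V) :
    ℕ → (V → V) → (V → V)
  | 0, ρ => ρ
  | i + 1, ρ => finalConfig τ Z (av i) (xiConfig τ Z av i ρ)

/-- The set of times at which the rotor walk (run until it first reaches the
sink `Z`) is at a vertex of `W`; its cardinality is the odometer `u(a,Z;ρ)(W)`. -/
def visitTimes [DecidableEq V] (τ : V → V → V) (Z : Set V) (a : V) (ρ : V → V)
    (W : Set V) : Set ℕ :=
  {t | (rotorWalk τ Z a ρ t).1 ∈ W ∧ ∀ s < t, (rotorWalk τ Z a ρ s).1 ∉ Z}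

/-- The event `E_{r,W}(a,Z)`: the rotor walk with initial location `a` and sink `Z`
visits `W` some time after visiting a vertex at graph distance at least `r` from `W`. -/
def Eset [DecidableEq V] (G : SimpleGraph V) (τ : V → V → V) (r : ℕ) (W : Set V)
    (a : V) (Z : Set V) : Set (V → V) :=
  {ρ | ∃ t₁ t₂ : ℕ, t₁ < t₂ ∧ (∀ s < t₂, (rotorWalk τ Z a ρ s).1 ∉ Z) ∧
    (∀ w ∈ W, r ≤ G.dist w (rotorWalk τ Z a ρ t₁).1) ∧ (rotorWalk τ Z a ρ t₂).1 ∈ W}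

/-- The event `D_r` (relative to the set `Z`): there is an oriented path in `ρ`
from a vertex at graph distance exactly `r` from `Z` to a vertex of `Z`. -/
def Dset (G : SimpleGraph V) (Z : Set V) (r : ℕ) : Set (V → V) :=
  {ρ | ∃ x : V, ∃ ℓ : ℕ, (∀ w ∈ Z, r ≤ G.dist w x) ∧ (∃ w ∈ Z, G.dist w x = r) ∧
    ρ^[ℓ] x ∈ Z}

/-- The transition matrix `P_Z` of simple random walk on `G` killed upon hitting `Z`. -/
noncomputable def killedP (G : SimpleGraph V) [∀ v : V, Fintype (G.neighborSet v)]
    (Z : Set V) : Matrix {x : V // x ∉ Z} {x : V // x ∉ Z} ℝ :=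
  fun x y => if G.Adj x.1 y.1 then (1 : ℝ) / (G.degree x.1) else 0

/-- The Green function `((I - P_Z)⁻¹)_{a,x}` of simple random walk killed at `Z`,
as a function of a pair of vertices (zero if `V ∖ Z` is infinite or `a ∈ Z` or `x ∈ Z`). -/
noncomputable def greenFn (G : SimpleGraph V) [DecidableEq V]
    [∀ v : V, Fintype (G.neighborSet v)] (Z : Set V) (a x : V) : ℝ :=
  if h : ({y : V | y ∉ Z}).Finite ∧ a ∉ Z ∧ x ∉ Z then
    letI : Fintype {y : V // y ∉ Z} := h.1.fintype
    ((1 - killedP G Z)⁻¹) ⟨a, h.2.1⟩ ⟨x, h.2.2⟩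
  else 0

section RotorHelpers

variable {V : Type u} [DecidableEq V]

lemma rotorWalk_succ (τ : V → V → V) (Z : Set V) (a : V) (ρ : V → V) (t : ℕ) :
    rotorWalk τ Z a ρ (t + 1) = rotorStep τ Z (rotorWalk τ Z a ρ t) :=
  Function.iterate_succ_apply' _ _ _

lemma rotorWalk_freeze (τ : V → V → V) (Z : Set V) (a : V) (ρ : V → V) {t : ℕ}
    (h : (rotorWalk τ Z a ρ t).1 ∈ Z) :
    ∀ s, t ≤ s → rotorWalk τ Z a ρ s = rotorWalk τ Z a ρ t := by
  intro s hs
  induction s, hs using Nat.le_induction with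
  | base => rfl
  | succ n hn ih =>
    rw [rotorWalk_succ, ih]
    simp only [rotorStep, if_pos h]

lemma finalConfig_eq (τ : V → V → V) (Z : Set V) (a : V) (ρ : V → V) {t : ℕ}
    (h : (rotorWalk τ Z a ρ t).1 ∈ Z) :
    finalConfig τ Z a ρ = (rotorWalk τ Z a ρ t).2 := by
  funext x
  have hex : ∃ t' : ℕ, ∀ s : ℕ, t' ≤ s →
      (rotorWalk τ Z a ρ s).2 x = (rotorWalk τ Z a ρ t').2 x :=
    ⟨t, fun s hs => by rw [rotorWalk_freeze τ Z a ρ h s hs]⟩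
  have h1 := hex.choose_spec (max hex.choose t) (le_max_left _ _)
  have h2 : rotorWalk τ Z a ρ (max hex.choose t) = rotorWalk τ Z a ρ t :=
    rotorWalk_freeze τ Z a ρ h _ (le_max_right _ _)
  simp only [finalConfig, eventualVal, dif_pos hex]
  rw [← h1, h2]

lemma rotor_path (τ : V → V → V) (Z : Set V) (a : V) (ρ : V → V) :
    ∀ t s : ℕ, s ≤ t → ∃ ℓ : ℕ,
      ((rotorWalk τ Z a ρ t).2)^[ℓ] ((rotorWalk τ Z a ρ s).1)
        = (rotorWalk τ Z a ρ t).1 := by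
  classical
  intro t
  induction t with
  | zero => intro s hs; obtain rfl := Nat.le_zero.mp hs; exact ⟨0, rfl⟩
  | succ t ih =>
    intro s hs
    rcases Nat.lt_or_ge s (t + 1) with hlt | hge
    · have hst : s ≤ t := Nat.lt_succ_iff.mp hlt
      by_cases hZ : (rotorWalk τ Z a ρ t).1 ∈ Z
      · rw [rotorWalk_succ]
        simp only [rotorStep, if_pos hZ]
        exact ih s hst
      · obtain ⟨ℓ, hℓ⟩ := ih s hst
        set Xt := (rotorWalk τ Z a ρ t).1 with hXt
        set ρt := (rotorWalk τ Z a ρ t).2 with hρt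
        set Xs := (rotorWalk τ Z a ρ s).1 with hXs
        have hexQ : ∃ j : ℕ, ρt^[j] Xs = Xt := ⟨ℓ, hℓ⟩
        set ℓ₀ := Nat.find hexQ with hℓ₀def
        have hℓ₀ : ρt^[ℓ₀] Xs = Xt := Nat.find_spec hexQ
        have hmin : ∀ j < ℓ₀, ρt^[j] Xs ≠ Xt := fun j hj => Nat.find_min hexQ hj
        set X' := τ Xt (ρt Xt) with hX'
        set ρ' := Function.update ρt Xt X' with hρ'
        have hsame : ∀ j ≤ ℓ₀, ρ'^[j] Xs = ρt^[j] Xs := by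
          intro j hj
          induction j with
          | zero => rfl
          | succ k ihk =>
            have hk : k ≤ ℓ₀ := Nat.le_of_succ_le hj
            have hkne : ρt^[k] Xs ≠ Xt := hmin k (Nat.lt_of_succ_le hj)
            rw [Function.iterate_succ_apply', Function.iterate_succ_apply',
              ihk hk, hρ', Function.update_of_ne hkne]
        have key : ρ'^[ℓ₀ + 1] Xs = X' := by
          rw [Function.iterate_succ_apply', hsame ℓ₀ le_rfl, hℓ₀, hρ',
            Function.update_self]
        refine ⟨ℓ₀ + 1, ?_⟩
        rw [rotorWalk_succ]
        simp only [rotorStep, if_neg hZ]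
        rw [if_neg hZ]
        exact key
    · obtain rfl := le_antisymm hs hge
      exact ⟨0, rfl⟩
  
lemma rotor_adj (G : SimpleGraph V) (τ : V → V → V) (hτ : IsMechanism G τ)
    (Z : Set V) (a : V) (ρ : V → V) (hρ : ∀ x : V, G.Adj x (ρ x)) :
    ∀ t x, G.Adj x ((rotorWalk τ Z a ρ t).2 x) := by
  intro t
  induction t with
  | zero => exact hρ
  | succ t ih =>
    intro x
    rw [rotorWalk_succ]
    by_cases hZ : (rotorWalk τ Z a ρ t).1 ∈ Z
    · simp only [rotorStep, if_pos hZ]; exact ih x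
    · simp only [rotorStep, if_neg hZ]
      by_cases hx : x = (rotorWalk τ Z a ρ t).1
      · subst hx
        rw [Function.update_self]
        exact (hτ _).1.mapsTo (ih _)
      · rw [Function.update_of_ne hx]; exact ih x

lemma adj_dist_le {G : SimpleGraph V} {u v : V} (h : G.Adj u v) : G.dist u v ≤ 1 := by
  have := SimpleGraph.dist_le h.toWalk
  simpa [SimpleGraph.Adj.toWalk] using this

end RotorHelpers

/-- If `Z` is nonempty finite, `Z ⊆ Z'` with `V ∖ Z'` finite, and
`ρ ∈ E_{r,Z}(a,Z')`, then the final rotor configuration `σ(a,Z';ρ)` contains an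
oriented path from a vertex at distance at least `r` from `Z` to a vertex of `Z`;
in particular `σ(a,Z';ρ) ∈ D_r`. -/
theorem stmt10 {V : Type u} [DecidableEq V] (G : SimpleGraph V) (hconn : G.Connected)
    [∀ v : V, Fintype (G.neighborSet v)] (τ : V → V → V) (hτ : IsMechanism G τ)
    (Z : Set V) (hZ : Z.Nonempty) (hZfin : Z.Finite)
    (Z' : Set V) (hsub : Z ⊆ Z') (hZ'fin : (Z'ᶜ : Set V).Finite)
    (a : V) (r : ℕ) (ρ : V → V) (hρ : ∀ x : V, G.Adj x (ρ x))
    (hE : ρ ∈ Eset G τ r Z a Z') :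
    (∃ x : V, ∃ ℓ : ℕ, (∀ w ∈ Z, r ≤ G.dist w x) ∧
        (finalConfig τ Z' a ρ)^[ℓ] x ∈ Z) ∧
      finalConfig τ Z' a ρ ∈ Dset G Z r := by
  classical
  obtain ⟨t₁, t₂, hlt, hnotZ', hdistr, ht₂Z⟩ := hE
  have ht₂Z' : (rotorWalk τ Z' a ρ t₂).1 ∈ Z' := hsub ht₂Z
  have hfinal : finalConfig τ Z' a ρ = (rotorWalk τ Z' a ρ t₂).2 :=
    finalConfig_eq τ Z' a ρ ht₂Z'
  set σ := (rotorWalk τ Z' a ρ t₂).2 with hσ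
  set x₀ := (rotorWalk τ Z' a ρ t₁).1 with hx₀
  obtain ⟨ℓ, hℓ⟩ := rotor_path τ Z' a ρ t₂ t₁ hlt.le
  have hend : σ^[ℓ] x₀ ∈ Z := by rw [hℓ]; exact ht₂Z
  have hσadj : ∀ y : V, G.Adj y (σ y) := fun y => rotor_adj G τ hτ Z' a ρ hρ t₂ y
  -- distance to Z
  set D : V → ℕ := fun y => sInf ((fun w => G.dist w y) '' Z) with hD
  have hDne : ∀ y : V, ((fun w => G.dist w y) '' Z).Nonempty := fun y => hZ.image _
  have hDle : ∀ y : V, ∀ w ∈ Z, D y ≤ G.dist w y := fun y w hw =>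
    Nat.sInf_le ⟨w, hw, rfl⟩
  have hDmem : ∀ y : V, ∃ w ∈ Z, G.dist w y = D y := fun y => (Nat.sInf_mem (hDne y))
  have hDge : ∀ y : V, (∀ w ∈ Z, r ≤ G.dist w y) → r ≤ D y := by
    intro y hy
    obtain ⟨w, hw, hwd⟩ := hDmem y
    rw [← hwd]; exact hy w hw
  have hD0 : r ≤ D x₀ := hDge x₀ hdistr
  have hDend : D (σ^[ℓ] x₀) = 0 := by
    refine Nat.le_antisymm ?_ (Nat.zero_le _)
    have := hDle (σ^[ℓ] x₀) _ hend
    simpa [SimpleGraph.dist_self] using this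
  have hlip : ∀ y : V, D y ≤ D (σ y) + 1 := by
    intro y
    obtain ⟨w, hw, hwd⟩ := hDmem (σ y)
    calc D y ≤ G.dist w y := hDle y w hw
      _ ≤ G.dist w (σ y) + G.dist (σ y) y := hconn.dist_triangle
      _ ≤ D (σ y) + 1 := by
          have h1 : G.dist (σ y) y ≤ 1 := adj_dist_le (hσadj y).symm
          omega
  -- find the vertex at distance exactly r
  have main : ∃ x : V, ∃ ℓ' : ℕ, (∀ w ∈ Z, r ≤ G.dist w x) ∧
      (∃ w ∈ Z, G.dist w x = r) ∧ σ^[ℓ'] x ∈ Z := by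
    rcases Nat.eq_zero_or_pos r with hr | hr
    · refine ⟨σ^[ℓ] x₀, 0, ?_, ⟨σ^[ℓ] x₀, hend, ?_⟩, hend⟩
      · intro w hw; omega
      · rw [hr, SimpleGraph.dist_self]
    · have hexP : ∃ j : ℕ, D (σ^[j] x₀) < r := ⟨ℓ, by omega⟩
      have hjspec : D (σ^[Nat.find hexP] x₀) < r := Nat.find_spec hexP
      have hjle : Nat.find hexP ≤ ℓ := Nat.find_min' hexP (by omega)
      have hj0 : Nat.find hexP ≠ 0 := by
        intro h0
        rw [h0] at hjspec
        simp only [Function.iterate_zero_apply] at hjspec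
        omega
      set i := Nat.find hexP - 1 with hidef
      have hji : Nat.find hexP = i + 1 := by omega
      rw [hji] at hjspec
      have hjle' : i + 1 ≤ ℓ := by omega
      have hiP : ¬ D (σ^[i] x₀) < r := Nat.find_min hexP (by omega)
      have hstep : D (σ^[i] x₀) ≤ D (σ^[i + 1] x₀) + 1 := by
        have := hlip (σ^[i] x₀)
        rwa [← Function.iterate_succ_apply' σ i x₀] at this
      have hDi : D (σ^[i] x₀) = r := by omega
      refine ⟨σ^[i] x₀, ℓ - i, ?_, ?_, ?_⟩
      · intro w hw
        have := hDle (σ^[i] x₀) w hw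
        omega
      · obtain ⟨w, hw, hwd⟩ := hDmem (σ^[i] x₀)
        exact ⟨w, hw, by omega⟩
      · rw [← Function.iterate_add_apply]
        have : ℓ - i + i = ℓ := by omega
        rw [this]; exact hend
  obtain ⟨x, ℓ', h1, h2, h3⟩ := main
  rw [hfinal]
  exact ⟨⟨x, ℓ', h1, h3⟩, ⟨x, ℓ', h1, h2, h3⟩⟩
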